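/- Let G be a finite simple graph. The partition of the vertex set V whose blocks are the vertex sets of the connected components of the 2nd neighbourhood graph G_2 is a regular partition of G. -/

import Mathlib

/-!
STATEMENT 4: Let G be a finite simple graph. The partition of the vertex set V
whose blocks are the vertex sets of the connected components of the 2nd
neighbourhood graph G_2 is a regular partition of G.

Two vertices lie in the same block of this partition iff they are reachable
from one another in G_2, so regularity says: whenever a and b are reachable in
G_2 and {a,c} is an edge of G, there is a vertex d with {b,d} an edge of G and
c, d reachable in G_2.
-/

variable {V : Type*}

/-- The `n`-th neighbourhood graph of a simple graph `G`. -/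
def nbhdGraph (G : SimpleGraph V) (n : ℕ) : SimpleGraph V where
  Adj u v := u ≠ v ∧ ∃ p : G.Walk u v, p.IsPath ∧ p.length = n
  symm := by
    refine ⟨?_⟩
    rintro u v ⟨huv, p, hp, hl⟩
    exact ⟨huv.symm, p.reverse, hp.reverse, by simpa using hl⟩
  loopless := by
    refine ⟨?_⟩
    rintro v ⟨h, -⟩
    exact h rfl

lemma step_lemma (G : SimpleGraph V) {a b c : V}
    (h : (nbhdGraph G 2).Adj a b) (hac : G.Adj a c) :
    ∃ d, G.Adj b d ∧ (nbhdGraph G 2).Reachable c d := by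
  obtain ⟨hne, p, hp, hl⟩ := h
  cases p with
  | nil => simp at hl
  | cons hax q =>
    cases q with
    | nil => simp at hl
    | cons hxb r =>
      cases r with
      | nil =>
        rename_i x
        by_cases hcx : c = x
        · subst hcx
          exact ⟨c, hxb.symm, SimpleGraph.Reachable.refl c⟩
        · refine ⟨x, hxb.symm, SimpleGraph.Adj.reachable ?_⟩
          refine ⟨hcx, SimpleGraph.Walk.cons hac.symm (SimpleGraph.Walk.cons hax SimpleGraph.Walk.nil), ?_, rfl⟩
          simp [SimpleGraph.Walk.isPath_def, hac.ne', hax.ne, hcx]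
      | cons h3 r2 => simp at hl

theorem stmt4 [Fintype V] (G : SimpleGraph V)
    (a b : V) (hab : (nbhdGraph G 2).Reachable a b)
    (c : V) (hac : G.Adj a c) :
    ∃ d, G.Adj b d ∧ (nbhdGraph G 2).Reachable c d := by
  obtain ⟨p⟩ := hab
  induction p generalizing c with
  | nil => exact ⟨c, hac, SimpleGraph.Reachable.refl c⟩
  | cons h q ih =>
    obtain ⟨d', hd', hcd'⟩ := step_lemma G h hac
    obtain ⟨d, hd, hd2⟩ := ih _ hd'
    exact ⟨d, hd, hcd'.trans hd2⟩
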